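/- Let γ > 1, let p : (0,∞) → ℝ be continuously differentiable with p'(ρ) > 0 for all ρ > 0 and liminf_{ρ→∞} p(ρ)/ρ^γ ≥ p̲ for some constant p̲ > 0, and let P be a pressure potential for p. Then for every ρ̄ > 0 there exists a constant C > 0 such that ρ^γ ≤ C · E(ρ|ρ̄) for all ρ ≥ ρ̄ + 1. -/

import Mathlib

open Filter

/-- Let `γ > 1`, let `p : (0,∞) → ℝ` be continuously differentiable with
`p' ρ > 0` for all `ρ > 0` and `liminf_{ρ→∞} p(ρ)/ρ^γ ≥ p̲` for some constant `p̲ > 0`, and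
let `P` be a pressure potential for `p`. Then for every `ρ̄ > 0` there exists `C > 0` such
that `ρ^γ ≤ C · E(ρ|ρ̄)` for all `ρ ≥ ρ̄ + 1`, where
`E(ρ|ρ̄) = P(ρ) − P'(ρ̄)(ρ − ρ̄) − P(ρ̄)`. -/
theorem relative_energy_coercive_at_infinity
    (γ : ℝ) (hγ : 1 < γ)
    (p p' P P' : ℝ → ℝ)
    (hp : ∀ ρ > (0:ℝ), HasDerivAt p (p' ρ) ρ)
    (hp'cont : ContinuousOn p' (Set.Ioi (0:ℝ)))
    (hp'pos : ∀ ρ > (0:ℝ), 0 < p' ρ)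
    (plow : ℝ) (hplow : 0 < plow)
    (hliminf : plow ≤ Filter.liminf (fun ρ : ℝ => p ρ / ρ ^ γ) Filter.atTop)
    (hP : ∀ ρ > (0:ℝ), HasDerivAt P (P' ρ) ρ)
    (hPp : ∀ ρ > (0:ℝ), ρ * P' ρ - P ρ = p ρ) :
    ∀ ρbar > (0:ℝ), ∃ C > (0:ℝ), ∀ ρ, ρbar + 1 ≤ ρ →
      ρ ^ γ ≤ C * (P ρ - P' ρbar * (ρ - ρbar) - P ρbar) := by
  intro ρbar hρbar
  classical
  obtain ⟨E, hEapp⟩ : ∃ E : ℝ → ℝ, ∀ ρ, E ρ = P ρ - P' ρbar * (ρ - ρbar) - P ρbar :=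
    ⟨_, fun ρ => rfl⟩
  -- derivative of E
  have hE : ∀ ρ > (0:ℝ), HasDerivAt E (P' ρ - P' ρbar) ρ := by
    intro ρ hρ
    have h1 := ((hP ρ hρ).sub
      (((hasDerivAt_id ρ).sub_const ρbar).const_mul (P' ρbar))).sub_const (P ρbar)
    have h2 : E = fun ρ => P ρ - P' ρbar * (ρ - ρbar) - P ρbar := funext hEapp
    rw [h2]
    simpa [mul_comm] using h1
  -- P' as an explicit formula
  have hP'eq : ∀ ρ > (0:ℝ), P' ρ = (P ρ + p ρ) / ρ := by
    intro ρ hρ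
    have h := hPp ρ hρ
    field_simp
    linarith
  -- derivative of P'
  have hP' : ∀ ρ > (0:ℝ), HasDerivAt P' (p' ρ / ρ) ρ := by
    intro ρ hρ
    have hρ0 : (ρ:ℝ) ≠ 0 := ne_of_gt hρ
    have h1 : HasDerivAt (fun x => (P x + p x) / x)
        (((P' ρ + p' ρ) * ρ - (P ρ + p ρ) * 1) / ρ ^ 2) ρ := by
      exact (((hP ρ hρ).add (hp ρ hρ)).div (hasDerivAt_id ρ) hρ0 :)
    have heq : P' =ᶠ[nhds ρ] fun x => (P x + p x) / x := by
      filter_upwards [Ioi_mem_nhds hρ] with x hx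
      exact hP'eq x hx
    have h2 := h1.congr_of_eventuallyEq heq
    refine h2.congr_deriv ?_
    have hpp := hPp ρ hρ
    field_simp
    nlinarith [hPp ρ hρ]
  -- P' is strictly monotone on (0,∞)
  have hP'mono : StrictMonoOn P' (Set.Ioi (0:ℝ)) := by
    apply strictMonoOn_of_deriv_pos (convex_Ioi 0)
    · exact fun x hx => (hP' x hx).continuousAt.continuousWithinAt
    · intro x hx
      rw [interior_Ioi] at hx
      rw [(hP' x hx).deriv]
      exact div_pos (hp'pos x hx) hx
  -- E is strictly monotone on [ρbar, ∞)
  have hEmono : StrictMonoOn E (Set.Ici ρbar) := by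
    apply strictMonoOn_of_deriv_pos (convex_Ici ρbar)
    · intro x hx
      exact (hE x (lt_of_lt_of_le hρbar hx)).continuousAt.continuousWithinAt
    · intro x hx
      rw [interior_Ici] at hx
      rw [(hE x (hρbar.trans hx)).deriv]
      have := hP'mono (Set.mem_Ioi.2 hρbar) (Set.mem_Ioi.2 (hρbar.trans hx)) hx
      linarith
  have hEρbar : E ρbar = 0 := by rw [hEapp]; ring
  have he1 : 0 < E (ρbar + 1) := by
    have := hEmono Set.self_mem_Ici (by simp : ρbar + 1 ∈ Set.Ici ρbar) (by linarith)
    rwa [hEρbar] at this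
  have hElb : ∀ ρ, ρbar + 1 ≤ ρ → E (ρbar + 1) ≤ E ρ := by
    intro ρ h
    exact hEmono.monotoneOn (by simp : ρbar + 1 ∈ Set.Ici ρbar)
      (by simp only [Set.mem_Ici]; linarith) h
  -- p is monotone on (0,∞)
  have hpmono : MonotoneOn p (Set.Ioi (0:ℝ)) := by
    apply (strictMonoOn_of_deriv_pos (convex_Ioi 0) ?_ ?_).monotoneOn
    · exact fun x hx => (hp x hx).continuousAt.continuousWithinAt
    · intro x hx
      rw [interior_Ioi] at hx
      rw [(hp x hx).deriv]
      exact hp'pos x hx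
  -- p ρ / ρ^γ is eventually bounded below
  have hbdd : IsBoundedUnder (· ≥ ·) atTop (fun ρ : ℝ => p ρ / ρ ^ γ) := by
    refine ⟨min (p 1) 0, ?_⟩
    rw [eventually_map]
    filter_upwards [eventually_ge_atTop (1:ℝ)] with ρ hρ
    have hρ0 : (0:ℝ) < ρ := by linarith
    have hpow1 : (1:ℝ) ≤ ρ ^ γ := Real.one_le_rpow hρ (by linarith)
    have hpow0 : (0:ℝ) < ρ ^ γ := by linarith
    rcases le_or_gt 0 (p ρ) with hpρ | hpρ
    · have : 0 ≤ p ρ / ρ ^ γ := div_nonneg hpρ hpow0.le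
      simp only [ge_iff_le]
      exact le_trans (min_le_right _ _) this
    · have hp1 : p 1 ≤ p ρ := hpmono (Set.mem_Ioi.2 one_pos) (Set.mem_Ioi.2 hρ0) hρ
      have h1 : p ρ ≤ p ρ / ρ ^ γ := by
        rw [le_div_iff₀ hpow0]
        nlinarith
      simp only [ge_iff_le]
      exact le_trans (min_le_left _ _) (le_trans hp1 h1)
  -- eventually p ρ ≥ (plow/2) ρ^γ
  have hev : ∀ᶠ ρ in atTop, plow / 2 < p ρ / ρ ^ γ :=
    eventually_lt_of_lt_liminf (lt_of_lt_of_le (by linarith) hliminf) hbdd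
  obtain ⟨M₀, hM₀⟩ := eventually_atTop.mp hev
  obtain ⟨M, hMdef⟩ : ∃ M : ℝ, M = max M₀ (max (ρbar + 1) 1) := ⟨_, rfl⟩
  have hM1 : (1:ℝ) ≤ M := hMdef ▸ le_trans (le_max_right _ _) (le_max_right _ _)
  have hMρbar : ρbar + 1 ≤ M := hMdef ▸ le_trans (le_max_left _ _) (le_max_right _ _)
  have hM0 : (0:ℝ) < M := by linarith
  have hpl : ∀ ρ, M ≤ ρ → plow / 2 * ρ ^ γ ≤ p ρ := by
    intro ρ hρ
    have hρ0 : (0:ℝ) < ρ := lt_of_lt_of_le hM0 hρ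
    have h1 := hM₀ ρ (le_trans (hMdef ▸ le_max_left _ _) hρ)
    have hpow0 : (0:ℝ) < ρ ^ γ := Real.rpow_pos_of_pos hρ0 γ
    rw [lt_div_iff₀ hpow0] at h1
    linarith
  -- the constant c and the function g
  obtain ⟨c, hcdef⟩ : ∃ c : ℝ, c = plow / (2 * (γ - 1)) := ⟨_, rfl⟩
  have hγ1 : γ - 1 ≠ 0 := by linarith
  have hc : 0 < c := hcdef ▸ div_pos hplow (by linarith)
  have hcγ : c * (γ - 1) = plow / 2 := by
    rw [hcdef]
    field_simp
  obtain ⟨g, hgapp⟩ : ∃ g : ℝ → ℝ, ∀ ρ, g ρ = P ρ / ρ - c * ρ ^ (γ - 1) :=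
    ⟨_, fun ρ => rfl⟩
  have hQ : ∀ ρ > (0:ℝ), HasDerivAt (fun x => P x / x) (p ρ / ρ ^ 2) ρ := by
    intro ρ hρ
    have h1 := (hP ρ hρ).div (hasDerivAt_id ρ) (ne_of_gt hρ)
    refine h1.congr_deriv ?_
    simp only [id_eq, mul_one]
    rw [← hPp ρ hρ]
    ring
  have hg : ∀ ρ > (0:ℝ), HasDerivAt g
      (p ρ / ρ ^ 2 - c * ((γ - 1) * ρ ^ (γ - 1 - 1))) ρ := by
    intro ρ hρ
    have := (hQ ρ hρ).sub ((Real.hasDerivAt_rpow_const (p := γ - 1)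
      (Or.inl (ne_of_gt hρ))).const_mul c)
    have h2 : g = fun ρ => P ρ / ρ - c * ρ ^ (γ - 1) := funext hgapp
    rw [h2]
    exact this
  -- g is monotone on [M, ∞)
  have hgmono : MonotoneOn g (Set.Ici M) := by
    apply monotoneOn_of_deriv_nonneg (convex_Ici M)
    · intro x hx
      have hx0 : (0:ℝ) < x := lt_of_lt_of_le hM0 hx
      exact (hg x hx0).continuousAt.continuousWithinAt
    · intro x hx
      rw [interior_Ici] at hx
      have hx0 : (0:ℝ) < x := lt_trans hM0 hx
      exact (hg x hx0).differentiableAt.differentiableWithinAt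
    · intro x hx
      rw [interior_Ici] at hx
      have hx0 : (0:ℝ) < x := lt_trans hM0 hx
      rw [(hg x hx0).deriv]
      have hEq : x ^ (γ - 1 - 1) = x ^ γ / x ^ 2 := by
        rw [show γ - 1 - 1 = γ - 2 by ring, Real.rpow_sub hx0, Real.rpow_two]
      have hx2 : (0:ℝ) < x ^ 2 := by positivity
      have key : c * ((γ - 1) * x ^ (γ - 1 - 1)) = plow / 2 * x ^ γ / x ^ 2 := by
        rw [hEq, show c * ((γ - 1) * (x ^ γ / x ^ 2)) = c * (γ - 1) * (x ^ γ / x ^ 2) by ring,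
          hcγ]
        ring
      rw [key, sub_nonneg]
      have hple := hpl x hx.le
      gcongr
  -- lower bound for P
  have hPlb : ∀ ρ, M ≤ ρ → c * ρ ^ γ + g M * ρ ≤ P ρ := by
    intro ρ hρ
    have hρ0 : (0:ℝ) < ρ := lt_of_lt_of_le hM0 hρ
    have h1 : g M ≤ g ρ := hgmono Set.self_mem_Ici hρ hρ
    have h3 : c * ρ ^ (γ - 1) * ρ = c * ρ ^ γ := by
      rw [Real.rpow_sub_one (ne_of_gt hρ0)]
      field_simp
    have h4 : g M * ρ ≤ g ρ * ρ := mul_le_mul_of_nonneg_right h1 hρ0.le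
    have h5 : g ρ * ρ = P ρ - c * ρ ^ γ := by
      rw [hgapp ρ, sub_mul, div_mul_cancel₀ _ (ne_of_gt hρ0), h3]
    nlinarith
  -- lower bound for E
  obtain ⟨K, hKdef⟩ : ∃ K : ℝ, K = P' ρbar - g M := ⟨_, rfl⟩
  obtain ⟨K', hK'def⟩ : ∃ K' : ℝ, K' = P ρbar - P' ρbar * ρbar := ⟨_, rfl⟩
  have hElb2 : ∀ ρ, M ≤ ρ → c * ρ ^ γ - K * ρ - K' ≤ E ρ := by
    intro ρ hρ
    have h1 := hPlb ρ hρ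
    rw [hEapp ρ, hKdef, hK'def]
    nlinarith
  -- tail threshold
  have htail : Tendsto (fun ρ : ℝ => c / 2 * ρ ^ γ - K * ρ - K') atTop atTop := by
    have h1 : Tendsto (fun ρ : ℝ => ρ ^ (γ - 1)) atTop atTop :=
      tendsto_rpow_atTop (by linarith)
    have h2' : Tendsto (fun ρ : ℝ => c / 2 * ρ ^ (γ - 1)) atTop atTop :=
      Tendsto.const_mul_atTop (by positivity : (0:ℝ) < c / 2) h1
    have h2 : Tendsto (fun ρ : ℝ => c / 2 * ρ ^ (γ - 1) - K) atTop atTop := by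
      simpa [sub_eq_add_neg] using tendsto_atTop_add_const_right atTop (-K) h2'
    have h3' : Tendsto (fun ρ : ℝ => ρ * (c / 2 * ρ ^ (γ - 1) - K)) atTop atTop :=
      Tendsto.atTop_mul_atTop₀ tendsto_id h2
    have h3 : Tendsto (fun ρ : ℝ => ρ * (c / 2 * ρ ^ (γ - 1) - K) - K') atTop atTop := by
      simpa [sub_eq_add_neg] using tendsto_atTop_add_const_right atTop (-K') h3' 
    apply h3.congr'
    filter_upwards [eventually_gt_atTop (0:ℝ)] with ρ hρ
    have h4 : ρ ^ (γ - 1) * ρ = ρ ^ γ := by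
      rw [Real.rpow_sub_one (ne_of_gt hρ)]
      field_simp
    nlinarith [h4]
  obtain ⟨M₁, hM₁⟩ := eventually_atTop.mp (htail.eventually_ge_atTop 0)
  obtain ⟨M', hM'def⟩ : ∃ M' : ℝ, M' = max M₁ M := ⟨_, rfl⟩
  have hM'M : M ≤ M' := hM'def ▸ le_max_right _ _
  have hM'0 : (0:ℝ) < M' := lt_of_lt_of_le hM0 hM'M
  -- tail bound
  have hTail : ∀ ρ, M' ≤ ρ → ρ ^ γ ≤ 2 / c * E ρ := by
    intro ρ hρ
    have h1 := hElb2 ρ (le_trans hM'M hρ)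
    have h2 := hM₁ ρ (le_trans (hM'def ▸ le_max_left M₁ M) hρ)
    have h3 : c / 2 * ρ ^ γ ≤ E ρ := by linarith
    rw [div_mul_eq_mul_div, le_div_iff₀ hc]
    nlinarith
  -- final constant
  refine ⟨max (2 / c) (M' ^ γ / E (ρbar + 1)), ?_, ?_⟩
  · exact lt_of_lt_of_le (by positivity) (le_max_left _ _)
  · intro ρ hρ
    have hρ0 : (0:ℝ) < ρ := by linarith
    have hEρ : E (ρbar + 1) ≤ E ρ := hElb ρ hρ
    have hEρ0 : 0 < E ρ := lt_of_lt_of_le he1 hEρ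
    rw [show P ρ - P' ρbar * (ρ - ρbar) - P ρbar = E ρ from (hEapp ρ).symm]
    rcases le_or_gt ρ M' with hcase | hcase
    · have h1 : ρ ^ γ ≤ M' ^ γ := Real.rpow_le_rpow hρ0.le hcase (by linarith)
      have h2 : M' ^ γ / E (ρbar + 1) ≤ max (2 / c) (M' ^ γ / E (ρbar + 1)) :=
        le_max_right _ _
      have h3 : M' ^ γ / E (ρbar + 1) * E (ρbar + 1) = M' ^ γ := by
        field_simp
      have h4 : M' ^ γ / E (ρbar + 1) * E (ρbar + 1) ≤
          M' ^ γ / E (ρbar + 1) * E ρ :=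
        mul_le_mul_of_nonneg_left hEρ (by positivity)
      have h5 : M' ^ γ / E (ρbar + 1) * E ρ ≤
          max (2 / c) (M' ^ γ / E (ρbar + 1)) * E ρ :=
        mul_le_mul_of_nonneg_right h2 hEρ0.le
      calc ρ ^ γ ≤ M' ^ γ := h1
        _ = M' ^ γ / E (ρbar + 1) * E (ρbar + 1) := h3.symm
        _ ≤ _ := le_trans h4 h5
    · have h1 := hTail ρ hcase.le
      have h2 : 2 / c * E ρ ≤ max (2 / c) (M' ^ γ / E (ρbar + 1)) * E ρ :=
        mul_le_mul_of_nonneg_right (le_max_left _ _) hEρ0.le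
      linarith
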